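/- arXiv:1003.3972 — 4 statements merged into one kernel-verified Lean document; each statement's English description precedes it below -/
import Mathlib

section
/- Let M be a finitely generated module over a Noetherian local ring R. There exists a unique filtration D_0 ⊂ D_1 ⊂ … ⊂ D_t = M of submodules such that D_0 = H^0_m(M), and for each i ≥ 1, D_{i-1} is the largest submodule of D_i with dim D_{i-1} < dim D_i. -/
open IsLocalRing

/-- Krull dimension of a module: the Krull dimension of its support in `Spec R`. -/
noncomputable def mDim (R : Type*) [CommRing R] (M : Type*) [AddCommGroup M] [Module R M] :
    WithBot (WithTop ℕ) :=
  Order.krullDim (Module.support R M)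

/-- Length of a module, as the Krull dimension of its lattice of submodules. -/
noncomputable def eLength (R : Type*) [Ring R] (M : Type*) [AddCommGroup M] [Module R M] : ℕ∞ :=
  (Order.krullDim (Submodule R M)).unbotD 0

/-- A system of parameters of `M`: `n = dim M` elements of the maximal ideal such that the
quotient of `M` by them has finite length. -/
def IsSOP (R : Type*) [CommRing R] [IsLocalRing R] (M : Type*) [AddCommGroup M] [Module R M]
    (n : ℕ) (x : Fin n → R) : Prop :=
  mDim R M = (n : WithBot (WithTop ℕ)) ∧ (∀ j, x j ∈ maximalIdeal R) ∧
    IsFiniteLength R (M ⧸ (Ideal.span (Set.range x) • (⊤ : Submodule R M)))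

/-- A good system of parameters of `M` with respect to the filtration `F 0 ⊆ F 1 ⊆ ... ⊆ F t = M`:
a system of parameters `x` such that `(x_{d_i+1}, …, x_d) M ∩ F i = 0` where `d_i = dim (F i)`
(indices are zero-based, so the condition is over `j` with `d_i ≤ j`). -/
def IsGoodSOP (R : Type*) [CommRing R] [IsLocalRing R] (M : Type*) [AddCommGroup M] [Module R M]
    (t : ℕ) (F : ℕ → Submodule R M) (n : ℕ) (x : Fin n → R) : Prop :=
  IsSOP R M n x ∧ ∀ i < t,
    (Ideal.span (x '' {j | mDim R ↥(F i) ≤ (j.val : WithBot (WithTop ℕ))}) • (⊤ : Submodule R M)) ⊓ F i = ⊥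

/-- `D 0 ⊆ D 1 ⊆ ... ⊆ D t = M` is the dimension filtration of `M`: `D 0 = H^0_m(M)`,
dimensions strictly increase, and each `D i` is the largest submodule of `D (i+1)` of strictly
smaller dimension. -/
def IsDimFiltration (R : Type*) [CommRing R] [IsLocalRing R] (M : Type*) [AddCommGroup M]
    [Module R M] (t : ℕ) (D : ℕ → Submodule R M) : Prop :=
  D t = ⊤ ∧
  (∀ x : M, x ∈ D 0 ↔ ∃ n : ℕ, ∀ r ∈ (maximalIdeal R) ^ n, r • x = 0) ∧
  (∀ i < t, mDim R ↥(D i) < mDim R ↥(D (i + 1))) ∧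
  (∀ i < t, ∀ N : Submodule R M, N ≤ D (i + 1) → mDim R ↥N < mDim R ↥(D (i + 1)) → N ≤ D i)

/-- A filtration `F 0 ⊆ F 1 ⊆ ... ⊆ F t = M` satisfying the dimension condition:
strictly increasing dimensions. -/
def DimCond (R : Type*) [CommRing R] (M : Type*) [AddCommGroup M] [Module R M]
    (t : ℕ) (F : ℕ → Submodule R M) : Prop :=
  F t = ⊤ ∧ (∀ i < t, F i ≤ F (i + 1)) ∧ ∀ i < t, mDim R ↥(F i) < mDim R ↥(F (i + 1))

/-- A ring is catenary if any two saturated chains of primes with the same endpoints have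
the same length. -/
def IsCatenary (R : Type*) [CommRing R] : Prop :=
  ∀ c₁ c₂ : LTSeries (PrimeSpectrum R), c₁.head = c₂.head → c₁.last = c₂.last →
    (∀ i : Fin c₁.length, ¬ ∃ q, c₁ i.castSucc < q ∧ q < c₁ i.succ) →
    (∀ i : Fin c₂.length, ¬ ∃ q, c₂ i.castSucc < q ∧ q < c₂ i.succ) →
    c₁.length = c₂.length

/-- A finitely generated module over a Noetherian local ring is Cohen-Macaulay if it is zero or
has a system of parameters which is a regular sequence on it. -/
def IsCMMod (R : Type*) [CommRing R] [IsLocalRing R] (M : Type*) [AddCommGroup M]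
    [Module R M] : Prop :=
  Subsingleton M ∨
    ∃ (n : ℕ) (x : Fin n → R), IsSOP R M n x ∧ RingTheory.Sequence.IsRegular M (List.ofFn x)

/-- A module is sequentially Cohen-Macaulay if every quotient of consecutive terms of its
dimension filtration is Cohen-Macaulay. -/
def IsSeqCM (R : Type*) [CommRing R] [IsLocalRing R] (M : Type*) [AddCommGroup M]
    [Module R M] : Prop :=
  ∃ (t : ℕ) (D : ℕ → Submodule R M), IsDimFiltration R M t D ∧
    ∀ i, 1 ≤ i → i ≤ t → IsCMMod R (↥(D i) ⧸ (D (i - 1)).comap (D i).subtype)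

section OrderAux
lemma krullDim_set_mono {α : Type*} [Preorder α] {s t : Set α} (h : s ⊆ t) :
    Order.krullDim s ≤ Order.krullDim t :=
  Order.krullDim_le_of_strictMono (Set.inclusion h) (fun _ _ hlt => hlt)

lemma krullDim_union_le {α : Type*} [Preorder α] {s t : Set α}
    (hs : ∀ a ∈ s, ∀ b : α, a ≤ b → b ∈ s) (ht : ∀ a ∈ t, ∀ b : α, a ≤ b → b ∈ t) :
    Order.krullDim ↥(s ∪ t) ≤ max (Order.krullDim ↥s) (Order.krullDim ↥t) := by
  refine iSup_le fun p => ?_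
  rcases p.head.2 with h | h
  · refine le_trans ?_ (le_max_left _ _)
    exact Order.LTSeries.length_le_krullDim
      (⟨p.length, fun i => ⟨(p i).1, hs _ h _ (Subtype.coe_le_coe.mpr (p.monotone (Fin.zero_le i)))⟩,
        fun i => p.step i⟩ : LTSeries s)
  · refine le_trans ?_ (le_max_right _ _)
    exact Order.LTSeries.length_le_krullDim
      (⟨p.length, fun i => ⟨(p i).1, ht _ h _ (Subtype.coe_le_coe.mpr (p.monotone (Fin.zero_le i)))⟩,
        fun i => p.step i⟩ : LTSeries t)
end OrderAux

section ModAux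
variable (R : Type*) [CommRing R] (M : Type*) [AddCommGroup M] [Module R M]

section Noeth
variable [IsNoetherianRing R] [Module.Finite R M]

lemma mdim_mono {N N' : Submodule R M} (h : N ≤ N') : mDim R N ≤ mDim R N' :=
  krullDim_set_mono (Module.support_subset_of_injective _
    (Submodule.inclusion_injective h))

lemma supp_zeroLocus_eq (N : Submodule R M) :
    Module.support R N = PrimeSpectrum.zeroLocus (N.annihilator : Set R) := by
  haveI : Module.Finite R N := Module.Finite.iff_fg.mpr (IsNoetherian.noetherian N)
  rw [Module.support_eq_zeroLocus, Submodule.annihilator]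

lemma mdim_bot : mDim R (⊥ : Submodule R M) = ⊥ := by
  rw [mDim, Module.support_eq_empty]
  exact Order.krullDim_eq_bot

lemma mdim_sup_le (N₁ N₂ : Submodule R M) :
    mDim R ↥(N₁ ⊔ N₂) ≤ max (mDim R ↥N₁) (mDim R ↥N₂) := by
  have hsub : Module.support R ↥(N₁ ⊔ N₂) ⊆
      Module.support R ↥N₁ ∪ Module.support R ↥N₂ := by
    rw [supp_zeroLocus_eq, supp_zeroLocus_eq, supp_zeroLocus_eq]
    intro p hp
    have hmul : N₁.annihilator * N₂.annihilator ≤ (N₁ ⊔ N₂).annihilator := by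
      refine le_trans Ideal.mul_le_inf (fun r hr => ?_)
      rw [Submodule.mem_annihilator]
      intro n hn
      rcases Submodule.mem_sup.mp hn with ⟨y, hy, z, hz, rfl⟩
      rw [smul_add, Submodule.mem_annihilator.mp hr.1 y hy,
        Submodule.mem_annihilator.mp hr.2 z hz, add_zero]
    have := le_trans hmul (SetLike.coe_subset_coe.mp ((PrimeSpectrum.mem_zeroLocus _ _).mp hp))
    rcases ((Ideal.IsPrime.mul_le p.isPrime).mp this) with h | h
    · exact Or.inl ((PrimeSpectrum.mem_zeroLocus _ _).mpr (SetLike.coe_subset_coe.mpr h))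
    · exact Or.inr ((PrimeSpectrum.mem_zeroLocus _ _).mpr (SetLike.coe_subset_coe.mpr h))
  refine le_trans (krullDim_set_mono hsub) (le_trans (krullDim_union_le ?_ ?_) le_rfl)
  · rw [supp_zeroLocus_eq]
    exact fun a ha b hab => (PrimeSpectrum.mem_zeroLocus _ _).mpr
      (le_trans ((PrimeSpectrum.mem_zeroLocus _ _).mp ha) hab)
  · rw [supp_zeroLocus_eq]
    exact fun a ha b hab => (PrimeSpectrum.mem_zeroLocus _ _).mpr
      (le_trans ((PrimeSpectrum.mem_zeroLocus _ _).mp ha) hab)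

lemma exists_greatest_submodule (S : Set (Submodule R M)) (hne : S.Nonempty)
    (hsup : ∀ N₁ ∈ S, ∀ N₂ ∈ S, N₁ ⊔ N₂ ∈ S) : ∃ N ∈ S, ∀ N' ∈ S, N' ≤ N := by
  obtain ⟨N, hN, hmax⟩ := (wellFounded_gt (α := Submodule R M)).has_min S hne
  refine ⟨N, hN, fun N' hN' => ?_⟩
  have h2 : N = N ⊔ N' := (le_sup_left.lt_or_eq).resolve_left (hmax _ (hsup N hN N' hN'))
  exact h2 ▸ le_sup_right
end Noeth

section Loc
variable [IsNoetherianRing R] [IsLocalRing R] [Module.Finite R M]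

lemma ann_of_dim_le_zero {N : Submodule R M} (h : mDim R ↥N ≤ 0) :
    ∃ n : ℕ, (maximalIdeal R) ^ n ≤ N.annihilator := by
  have hsupp : Module.support R ↥N ⊆ {closedPoint R} := by
    intro p hp
    by_contra hne
    have hm : closedPoint R ∈ Module.support R ↥N := by
      rw [supp_zeroLocus_eq] at hp ⊢
      exact (PrimeSpectrum.mem_zeroLocus _ _).mpr
        (le_trans ((PrimeSpectrum.mem_zeroLocus _ _).mp hp)
          (le_maximalIdeal p.isPrime.ne_top))
    have hlt : p < closedPoint R := lt_of_le_of_ne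
      (le_maximalIdeal p.isPrime.ne_top : p.asIdeal ≤ (closedPoint R).asIdeal)
      (fun hEq => hne (Set.mem_singleton_iff.mpr hEq))
    have hchain : (1 : WithBot ℕ∞) ≤ Order.krullDim (Module.support R ↥N) := by
      have hstep : ∀ i : Fin 1,
          (![(⟨p, hp⟩ : Module.support R ↥N), ⟨closedPoint R, hm⟩] i.castSucc) <
          (![(⟨p, hp⟩ : Module.support R ↥N), ⟨closedPoint R, hm⟩] i.succ) := by
        intro i
        fin_cases i
        exact hlt
      simpa using Order.LTSeries.length_le_krullDim
        (⟨1, ![⟨p, hp⟩, ⟨closedPoint R, hm⟩], hstep⟩ : LTSeries (Module.support R ↥N))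
    exact absurd (le_trans hchain h) (not_le_of_gt (WithBot.coe_lt_coe.mpr (zero_lt_one : (0 : ℕ∞) < 1)))
  have hrad : maximalIdeal R ≤ N.annihilator.radical := by
    intro r hr
    rw [Ideal.radical_eq_sInf]
    refine Submodule.mem_sInf.mpr ?_
    rintro J ⟨hJ1, hJ2⟩
    have hJmem : (⟨J, hJ2⟩ : PrimeSpectrum R) ∈ Module.support R ↥N := by
      rw [supp_zeroLocus_eq]
      exact (PrimeSpectrum.mem_zeroLocus _ _).mpr (SetLike.coe_subset_coe.mpr hJ1)
    have hJm : J = maximalIdeal R := congrArg PrimeSpectrum.asIdeal (hsupp hJmem)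
    exact hJm ▸ hr
  exact Ideal.exists_pow_le_of_le_radical_of_fg hrad (IsNoetherian.noetherian _)

lemma dim_span_le_zero {x : M} (h : ∃ n : ℕ, ∀ r ∈ (maximalIdeal R) ^ n, r • x = 0) :
    mDim R ↥(Submodule.span R {x}) ≤ 0 := by
  obtain ⟨n, hn⟩ := h
  have hann : (maximalIdeal R) ^ n ≤ (Submodule.span R {x}).annihilator := by
    intro r hr
    refine Submodule.mem_annihilator.mpr fun y hy => ?_
    rcases Submodule.mem_span_singleton.mp hy with ⟨a, rfl⟩
    rw [smul_comm, hn r hr, smul_zero]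
  have hsupp : Module.support R ↥(Submodule.span R {x}) ⊆ {closedPoint R} := by
    rw [supp_zeroLocus_eq]
    intro p hp
    have h1 : (maximalIdeal R) ^ n ≤ p.asIdeal :=
      le_trans hann (SetLike.coe_subset_coe.mp ((PrimeSpectrum.mem_zeroLocus _ _).mp hp))
    have h2 : maximalIdeal R ≤ p.asIdeal := Ideal.IsPrime.le_of_pow_le (hP := p.isPrime) h1
    have h3 : p.asIdeal = maximalIdeal R :=
      ((maximalIdeal.isMaximal R).eq_of_le p.isPrime.ne_top h2).symm
    exact Set.mem_singleton_iff.mpr (PrimeSpectrum.ext h3)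
  haveI : Subsingleton ↥(Module.support R ↥(Submodule.span R {x})) :=
    (Set.subsingleton_coe _).mpr (Set.subsingleton_singleton.anti hsupp)
  exact Order.krullDim_nonpos_of_subsingleton
end Loc

section Steps
variable [IsNoetherianRing R] [Module.Finite R M]

lemma stepSub_exists (N : Submodule R M) :
    ∃ G ∈ {K : Submodule R M | (K ≤ N ∧ mDim R ↥K < mDim R ↥N) ∨ K = ⊥},
      ∀ K ∈ {K : Submodule R M | (K ≤ N ∧ mDim R ↥K < mDim R ↥N) ∨ K = ⊥}, K ≤ G := by
  refine exists_greatest_submodule R M _ ⟨⊥, Or.inr rfl⟩ ?_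
  rintro N₁ (⟨hle1, hlt1⟩ | rfl) N₂ (⟨hle2, hlt2⟩ | rfl)
  · exact Or.inl ⟨sup_le hle1 hle2, lt_of_le_of_lt (mdim_sup_le R M N₁ N₂) (max_lt hlt1 hlt2)⟩
  · rw [sup_bot_eq]; exact Or.inl ⟨hle1, hlt1⟩
  · rw [bot_sup_eq]; exact Or.inl ⟨hle2, hlt2⟩
  · rw [sup_bot_eq]; exact Or.inr rfl

noncomputable def stepSub (N : Submodule R M) : Submodule R M :=
  (stepSub_exists R M N).choose

lemma stepSub_le (N : Submodule R M) : stepSub R M N ≤ N := by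
  rcases (stepSub_exists R M N).choose_spec.1 with ⟨h, _⟩ | h
  · exact h
  · unfold stepSub; rw [h]; exact bot_le

lemma stepSub_greatest {N K : Submodule R M} (h1 : K ≤ N) (h2 : mDim R ↥K < mDim R ↥N) :
    K ≤ stepSub R M N :=
  (stepSub_exists R M N).choose_spec.2 K (Or.inl ⟨h1, h2⟩)

lemma stepSub_dim_lt {N : Submodule R M} (h : ⊥ < mDim R ↥N) :
    mDim R ↥(stepSub R M N) < mDim R ↥N := by
  rcases (stepSub_exists R M N).choose_spec.1 with ⟨_, h2⟩ | h2
  · exact h2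
  · unfold stepSub; rw [h2, mdim_bot]; exact h

noncomputable def EE : ℕ → Submodule R M := fun k => (stepSub R M)^[k] ⊤

lemma EE_zero : EE R M 0 = ⊤ := rfl

lemma EE_succ (k : ℕ) : EE R M (k + 1) = stepSub R M (EE R M k) :=
  Function.iterate_succ_apply' _ _ _

lemma EE_le_of_le {j k : ℕ} (h : j ≤ k) : EE R M k ≤ EE R M j := by
  induction h with
  | refl => exact le_rfl
  | step h ih => exact le_trans (le_of_eq_of_le (EE_succ R M _) (stepSub_le R M _)) ih

lemma le_EE_succ {K : Submodule R M} :
    ∀ k, mDim R ↥K < mDim R ↥(EE R M k) → K ≤ EE R M (k + 1) := by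
  intro k
  induction k with
  | zero => intro h; rw [EE_succ]; exact stepSub_greatest R M (le_top.trans (EE_zero R M).symm.le) h
  | succ n ih =>
    intro h
    have h' : K ≤ EE R M (n + 1) :=
      ih (lt_of_lt_of_le h (mdim_mono R M (le_of_eq_of_le (EE_succ R M n) (stepSub_le R M _))))
    rw [EE_succ]
    exact stepSub_greatest R M h' h
end Steps
end ModAux


/-- existence and uniqueness of the dimension filtration. -/
theorem stmt2 {R M : Type*} [CommRing R] [IsNoetherianRing R] [IsLocalRing R]
    [AddCommGroup M] [Module R M] [Module.Finite R M] :
    ∃ (t : ℕ) (D : ℕ → Submodule R M), IsDimFiltration R M t D ∧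
      ∀ (t' : ℕ) (D' : ℕ → Submodule R M), IsDimFiltration R M t' D' →
        t' = t ∧ ∀ i ≤ t, D' i = D i := by
  classical
  have hterm : ∃ k, mDim R ↥(EE R M k) ≤ 0 := by
    by_contra hc
    push_neg at hc
    have hdesc : ∀ k, mDim R ↥(EE R M (k + 1)) < mDim R ↥(EE R M k) := fun k => by
      rw [EE_succ]
      exact stepSub_dim_lt R M (lt_of_le_of_lt bot_le (hc k))
    obtain ⟨n, hn⟩ := WellFounded.not_rel_apply_succ (r := (· < ·)) (fun k => mDim R ↥(EE R M k))
    exact hn (hdesc n)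
  set t := Nat.find hterm with ht_def
  have ht : mDim R ↥(EE R M t) ≤ 0 := Nat.find_spec hterm
  have htlt : ∀ k, k < t → 0 < mDim R ↥(EE R M k) := fun k hk =>
    lt_of_not_ge (Nat.find_min hterm hk)
  have hbotlt : ∀ k, k < t → (⊥ : WithBot ℕ∞) < mDim R ↥(EE R M k) := fun k hk =>
    lt_of_le_of_lt bot_le (htlt k hk)
  obtain ⟨G, hG, hGmax⟩ := exists_greatest_submodule R M {K | mDim R ↥K ≤ 0}
    ⟨⊥, by rw [Set.mem_setOf_eq, mdim_bot]; exact bot_le⟩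
    (fun N₁ h₁ N₂ h₂ => le_trans (mdim_sup_le R M N₁ N₂) (max_le h₁ h₂))
  have hEG : EE R M t = G := by
    refine le_antisymm (hGmax _ ht) ?_
    rcases Nat.eq_zero_or_pos t with h0 | h0
    · rw [h0, EE_zero]; exact le_top
    · obtain ⟨s, hs⟩ := Nat.exists_eq_succ_of_ne_zero (Nat.pos_iff_ne_zero.mp h0)
      rw [hs]
      exact le_EE_succ R M s (lt_of_le_of_lt hG (htlt s (by omega)))
  have hchar : ∀ x : M, x ∈ EE R M t ↔ ∃ n : ℕ, ∀ r ∈ (maximalIdeal R) ^ n, r • x = 0 := by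
    intro x
    rw [hEG]
    constructor
    · intro hx
      obtain ⟨n, hn⟩ := ann_of_dim_le_zero R M hG
      exact ⟨n, fun r hr => Submodule.mem_annihilator.mp (hn hr) x hx⟩
    · intro hx
      exact hGmax _ (dim_span_le_zero R M hx) (Submodule.mem_span_singleton_self x)
  refine ⟨t, fun i => EE R M (t - i), ⟨?_, ?_, ?_, ?_⟩, ?_⟩
  · show EE R M (t - t) = ⊤
    rw [Nat.sub_self]; exact EE_zero R M
  · simpa using hchar
  · intro i hi
    show mDim R ↥(EE R M (t - i)) < mDim R ↥(EE R M (t - (i + 1)))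
    rw [(by omega : t - i = (t - (i + 1)) + 1), EE_succ]
    exact stepSub_dim_lt R M (hbotlt _ (by omega))
  · intro i hi N h1 h2
    show N ≤ EE R M (t - i)
    rw [(by omega : t - i = (t - (i + 1)) + 1), EE_succ]
    exact stepSub_greatest R M h1 h2
  · intro t' D' hD'
    obtain ⟨h'top, h'H, h'dim, h'max⟩ := hD'
    have key : ∀ k, k ≤ t' → D' (t' - k) = EE R M k := by
      intro k
      induction k with
      | zero => intro _; rw [Nat.sub_zero, h'top]; exact (EE_zero R M).symm
      | succ k ih =>
        intro hk
        have ihk := ih (by omega)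
        have hi : t' - (k + 1) < t' := by omega
        have hi1 : t' - (k + 1) + 1 = t' - k := by omega
        have hd : mDim R ↥(D' (t' - (k + 1))) < mDim R ↥(EE R M k) := by
          have := h'dim (t' - (k + 1)) hi
          rwa [hi1, ihk] at this
        have sub1 : D' (t' - (k + 1)) ≤ EE R M (k + 1) := le_EE_succ R M k hd
        have hbk : (⊥ : WithBot ℕ∞) < mDim R ↥(EE R M k) := lt_of_le_of_lt bot_le hd
        have sub2 : EE R M (k + 1) ≤ D' (t' - (k + 1)) := by
          refine h'max (t' - (k + 1)) hi _ ?_ ?_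
          · rw [hi1, ihk]
            exact le_of_eq_of_le (EE_succ R M k) (stepSub_le R M _)
          · rw [hi1, ihk, EE_succ]
            exact stepSub_dim_lt R M hbk
        exact le_antisymm sub1 sub2
    have hD'0 : D' 0 = EE R M t' := by simpa using key t' le_rfl
    have hEq : EE R M t' = EE R M t := by
      rw [← hD'0]
      exact Submodule.ext fun x => (h'H x).trans (hchar x).symm
    have hbk' : ∀ k, k < t' → (⊥ : WithBot ℕ∞) < mDim R ↥(EE R M k) := by
      intro k hk
      have h1 := h'dim (t' - (k + 1)) (by omega)
      rw [(by omega : t' - (k + 1) + 1 = t' - k), key k (by omega)] at h1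
      exact lt_of_le_of_lt bot_le h1
    have htt : t' = t := by
      rcases lt_trichotomy t' t with h | h | h
      · have := ht
        rw [← hEq] at this
        exact absurd this (not_le_of_gt (htlt t' h))
      · exact h
      · exfalso
        have h1 : mDim R ↥(EE R M t') ≤ mDim R ↥(EE R M (t + 1)) :=
          mdim_mono R M (EE_le_of_le R M (by omega))
        have h2 : mDim R ↥(EE R M (t + 1)) < mDim R ↥(EE R M t) := by
          rw [EE_succ]
          exact stepSub_dim_lt R M (hbk' t h)
        rw [hEq] at h1
        exact absurd (lt_of_le_of_lt h1 h2) (lt_irrefl _)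
    subst htt
    refine ⟨rfl, fun i hi => ?_⟩
    have hk := key (t - i) (by omega)
    rw [(by omega : t - (t - i) = i)] at hk
    exact hk
end

section
/- Let M be a finitely generated module over a Noetherian local ring with dimension filtration D_0 ⊂ D_1 ⊂ … ⊂ D_t = M. If N is any submodule of M, then there exists an index i with N ⊆ D_i and dim N = dim D_i (when N ≠ 0). -/
open IsLocalRing

lemma mDim_mono {R M : Type*} [CommRing R] [AddCommGroup M] [Module R M]
    {N P : Submodule R M} (h : N ≤ P) : mDim R ↥N ≤ mDim R ↥P := by
  have hsub : Module.support R ↥N ⊆ Module.support R ↥P :=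
    Module.support_subset_of_injective (Submodule.inclusion h)
      (Submodule.inclusion_injective h)
  exact Order.krullDim_le_of_strictMono (Set.inclusion hsub) (fun a b hab => hab)

lemma mDim_nonneg_of_ne_bot {R M : Type*} [CommRing R] [AddCommGroup M] [Module R M]
    {N : Submodule R M} (h : N ≠ ⊥) : 0 ≤ mDim R ↥N := by
  have : Nontrivial ↥N := Submodule.nontrivial_iff_ne_bot.mpr h
  have hne : Module.support R ↥N ≠ ∅ := by
    intro hE
    exact (not_subsingleton ↥N) (Module.support_eq_empty_iff.mp hE)
  have : (Module.support R ↥N).Nonempty := Set.nonempty_iff_ne_empty.mpr hne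
  have : Nonempty ↥(Module.support R ↥N) := this.to_subtype
  exact Order.krullDim_nonneg

lemma mDim_D0_nonpos {R M : Type*} [CommRing R] [IsLocalRing R] [AddCommGroup M] [Module R M]
    {D₀ : Submodule R M}
    (h0 : ∀ x : M, x ∈ D₀ ↔ ∃ n : ℕ, ∀ r ∈ (maximalIdeal R) ^ n, r • x = 0) :
    mDim R ↥D₀ ≤ 0 := by
  have hsub : (Module.support R ↥D₀).Subsingleton := by
    intro p hp q hq
    have key : ∀ p : PrimeSpectrum R, p ∈ Module.support R ↥D₀ →
        p.asIdeal = maximalIdeal R := by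
      intro p hp
      have hle : maximalIdeal R ≤ p.asIdeal := by
        intro r hr
        by_contra hrp
        obtain ⟨m, hm⟩ := Module.mem_support_iff'.mp hp
        obtain ⟨n, hn⟩ := (h0 (m : M)).mp m.2
        have hpow : r ^ n ∈ (maximalIdeal R) ^ n := Ideal.pow_mem_pow hr n
        have hnp : r ^ n ∉ p.asIdeal := fun h => hrp (p.isPrime.mem_of_pow_mem n h)
        refine hm (r ^ n) hnp (Subtype.ext ?_)
        simpa using hn (r ^ n) hpow
      exact le_antisymm (IsLocalRing.le_maximalIdeal p.isPrime.ne_top) hle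
    exact PrimeSpectrum.ext (by rw [key p hp, key q hq])
  have : Subsingleton ↥(Module.support R ↥D₀) := hsub.coe_sort
  exact Order.krullDim_nonpos_of_subsingleton

/-- every nonzero submodule `N ⊆ M` is contained in some term `D i` of the
dimension filtration with `dim N = dim D i`. -/
theorem stmt4 {R M : Type*} [CommRing R] [IsNoetherianRing R] [IsLocalRing R]
    [AddCommGroup M] [Module R M] [Module.Finite R M]
    (t : ℕ) (D : ℕ → Submodule R M) (hD : IsDimFiltration R M t D) :
    ∀ N : Submodule R M, N ≠ ⊥ → ∃ i ≤ t, N ≤ D i ∧ mDim R ↥N = mDim R ↥(D i) := by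
  intro N hN
  obtain ⟨hDt, h0, hlt, hmax⟩ := hD
  classical
  have hPt : N ≤ D t := hDt ▸ le_top
  have hex : ∃ i, N ≤ D i := ⟨t, hPt⟩
  have hNi : N ≤ D (Nat.find hex) := Nat.find_spec hex
  have hit : Nat.find hex ≤ t := Nat.find_le hPt
  refine ⟨Nat.find hex, hit, hNi, ?_⟩
  have hle : mDim R ↥N ≤ mDim R ↥(D (Nat.find hex)) := mDim_mono hNi
  rcases Nat.eq_zero_or_pos (Nat.find hex) with hz | hpos
  · rw [hz] at hle ⊢
    rw [hz] at hNi
    exact le_antisymm hle ((mDim_D0_nonpos h0).trans (mDim_nonneg_of_ne_bot hN))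
  · refine le_antisymm hle ?_
    by_contra hlt'
    have hdim : mDim R ↥N < mDim R ↥(D (Nat.find hex)) := lt_of_le_of_ne hle (fun h => hlt' h.ge)
    have hk : Nat.find hex - 1 < t := by omega
    have hsucc : Nat.find hex - 1 + 1 = Nat.find hex := Nat.succ_pred_eq_of_pos hpos
    have hled : N ≤ D (Nat.find hex - 1) :=
      hmax (Nat.find hex - 1) hk N (hsucc ▸ hNi) (hsucc ▸ hdim)
    exact Nat.find_min hex (by omega) hled
end

section
/- Let M be a finitely generated module over a Noetherian local ring with dimension filtration D_0 ⊂ D_1 ⊂ … ⊂ D_t = M. Then for each i ≥ 1, every associated prime of D_i/D_{i-1} is of maximal dimension, i.e., Ass(D_i/D_{i-1}) = Assh(D_i/D_{i-1}) = {p ∈ Ass(D_i/D_{i-1}) : dim R/p = dim(D_i/D_{i-1})}. -/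
open IsLocalRing

open Order PrimeSpectrum

section helpers

variable {R : Type*} [CommRing R]

/-- Spec (R/I) → zero locus of I. -/
noncomputable def zlF (I : Ideal R) (q : PrimeSpectrum (R ⧸ I)) :
    (PrimeSpectrum.zeroLocus (R := R) I) :=
  ⟨⟨q.asIdeal.comap (Ideal.Quotient.mk I), inferInstance⟩, by
    intro a ha
    simp only [SetLike.mem_coe, Ideal.mem_comap]
    rw [Ideal.Quotient.eq_zero_iff_mem.mpr ha]
    exact q.asIdeal.zero_mem⟩

/-- zero locus of I → Spec (R/I). -/
noncomputable def zlG (I : Ideal R) (x : (PrimeSpectrum.zeroLocus (R := R) I)) :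
    PrimeSpectrum (R ⧸ I) :=
  haveI := x.1.isPrime
  ⟨x.1.asIdeal.map (Ideal.Quotient.mk I),
    Ideal.map_isPrime_of_surjective Ideal.Quotient.mk_surjective
      (by rw [Ideal.mk_ker]; exact x.2)⟩

lemma zlF_asIdeal (I : Ideal R) (q) : ((zlF I q).1).asIdeal = q.asIdeal.comap (Ideal.Quotient.mk I) := rfl
lemma zlG_asIdeal (I : Ideal R) (x) : (zlG I x).asIdeal = x.1.asIdeal.map (Ideal.Quotient.mk I) := rfl

/-- Order iso between `Spec (R/I)` and the zero locus of `I`. -/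
noncomputable def zlIso (I : Ideal R) :
    PrimeSpectrum (R ⧸ I) ≃o (PrimeSpectrum.zeroLocus (R := R) I) where
  toFun := zlF I
  invFun := zlG I
  left_inv q := PrimeSpectrum.ext (by
    rw [zlG_asIdeal, zlF_asIdeal]
    exact Ideal.map_comap_of_surjective _ Ideal.Quotient.mk_surjective _)
  right_inv x := Subtype.ext (PrimeSpectrum.ext (by
    rw [zlF_asIdeal, zlG_asIdeal]
    rw [Ideal.comap_map_of_surjective _ Ideal.Quotient.mk_surjective,
      ← RingHom.ker_eq_comap_bot, Ideal.mk_ker, sup_eq_left.mpr x.2]))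
  map_rel_iff' {a b} := by
    show zlF I a ≤ zlF I b ↔ a ≤ b
    constructor
    · intro h
      exact (Ideal.comap_le_comap_iff_of_surjective _ Ideal.Quotient.mk_surjective _ _).mp h
    · intro h
      exact Ideal.comap_mono h

lemma krullDim_zeroLocus (I : Ideal R) :
    Order.krullDim (PrimeSpectrum.zeroLocus (R := R) I) = ringKrullDim (R ⧸ I) :=
  (Order.krullDim_eq_of_orderIso (zlIso I)).symm

lemma krullDim_le_of_subset {S T : Set (PrimeSpectrum R)} (h : S ⊆ T) :
    Order.krullDim S ≤ Order.krullDim T :=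
  Order.krullDim_le_of_strictMono (Set.inclusion h) (fun _ _ hab => hab)

lemma krullDim_le_max_of_subset_union (I J : Ideal R) (S : Set (PrimeSpectrum R))
    (hS : S ⊆ zeroLocus I ∪ zeroLocus J) :
    Order.krullDim S ≤
      max (Order.krullDim (zeroLocus (R := R) I)) (Order.krullDim (zeroLocus (R := R) J)) := by
  rw [Order.krullDim]
  apply iSup_le
  intro c
  rcases hS c.head.2 with h | h
  · refine le_max_of_le_left ?_
    have hmem : ∀ j, ((c j : S) : PrimeSpectrum R) ∈ zeroLocus (I : Set R) := by
      intro j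
      have : c.head ≤ c j := c.monotone (Fin.zero_le _)
      exact fun a ha => this (h ha)
    exact LTSeries.length_le_krullDim
      ⟨c.length, fun j => ⟨(c j : S), hmem j⟩, fun j => c.step j⟩
  · refine le_max_of_le_right ?_
    have hmem : ∀ j, ((c j : S) : PrimeSpectrum R) ∈ zeroLocus (J : Set R) := by
      intro j
      have : c.head ≤ c j := c.monotone (Fin.zero_le _)
      exact fun a ha => this (h ha)
    exact LTSeries.length_le_krullDim
      ⟨c.length, fun j => ⟨(c j : S), hmem j⟩, fun j => c.step j⟩

end helpers

theorem stmt5' {R M : Type*} [CommRing R] [IsNoetherianRing R] [IsLocalRing R]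
    [AddCommGroup M] [Module R M] [Module.Finite R M]
    (t : ℕ) (D : ℕ → Submodule R M)
    (hD3 : ∀ i < t, mDim R ↥(D i) < mDim R ↥(D (i + 1)))
    (hD4 : ∀ i < t, ∀ N : Submodule R M, N ≤ D (i + 1) → mDim R ↥N < mDim R ↥(D (i + 1)) → N ≤ D i) :
    ∀ i, 1 ≤ i → i ≤ t →
      ∀ p ∈ associatedPrimes R (↥(D i) ⧸ (D (i - 1)).comap (D i).subtype),
        ringKrullDim (R ⧸ p) = mDim R (↥(D i) ⧸ (D (i - 1)).comap (D i).subtype) := by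
  intro i hi1 hit p hp
  set P : Submodule R ↥(D i) := (D (i - 1)).comap (D i).subtype with hP
  obtain ⟨hprime, x, hx⟩ := isAssociatedPrime_iff.mp hp
  -- the equivalence R ⧸ p ≃ₗ span x
  have hker : LinearMap.ker (LinearMap.toSpanSingleton R _ x) = p := by
    ext r
    rw [hx]
    simp [LinearMap.mem_ker, Submodule.mem_annihilator_span_singleton, Submodule.mem_colon_singleton,
      LinearMap.toSpanSingleton_apply]
  have e1 : (R ⧸ p) ≃ₗ[R] ↥(LinearMap.range (LinearMap.toSpanSingleton R _ x)) :=
    hker ▸ (LinearMap.toSpanSingleton R _ x).quotKerEquivRange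
  -- support of R ⧸ p
  have hsupp_p : Module.support R (R ⧸ p) = zeroLocus (p : Set R) := by
    rw [Module.support_eq_zeroLocus, Ideal.annihilator_quotient]
  -- step 2 : dim R/p ≤ mDim Q
  have hsub1 : Module.support R (R ⧸ p) ⊆
      Module.support R (↥(D i) ⧸ P) := by
    rw [e1.support_eq]
    exact Module.support_subset_of_injective _ (Submodule.injective_subtype _)
  have h2 : ringKrullDim (R ⧸ p) ≤ mDim R (↥(D i) ⧸ P) := by
    rw [← krullDim_zeroLocus, ← hsupp_p]
    exact krullDim_le_of_subset hsub1
  -- mDim Q ≤ mDim (D i)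
  have hQ : mDim R (↥(D i) ⧸ P) ≤ mDim R ↥(D i) :=
    krullDim_le_of_subset (Module.support_subset_of_surjective P.mkQ P.mkQ_surjective)
  refine le_antisymm h2 ?_
  by_contra hne
  have hlt : ringKrullDim (R ⧸ p) < mDim R (↥(D i) ⧸ P) := lt_of_le_of_ne h2 (fun h => hne h.ge)
  -- the submodule S and its support
  set S : Submodule R ↥(D i) := (R ∙ x).comap P.mkQ with hS
  have hPS : P ≤ S := fun y hy => by
    simp only [hS, Submodule.mem_comap, Submodule.mkQ_apply]
    rw [(Submodule.Quotient.mk_eq_zero P).mpr hy]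
    exact Submodule.zero_mem _
  set g : ↥S →ₗ[R] (↥(D i) ⧸ P) := P.mkQ.comp S.subtype with hg
  have hkerg : LinearMap.ker g = P.comap S.subtype := by
    rw [hg, LinearMap.ker_comp, Submodule.ker_mkQ]
  have hrangeg : LinearMap.range g = R ∙ x := by
    rw [hg, LinearMap.range_comp, Submodule.range_subtype, hS,
      Submodule.map_comap_eq, Submodule.range_mkQ, top_inf_eq]
  -- support of S
  have hsuppS : Module.support R ↥S =
      Module.support R ↥(P.comap S.subtype) ∪ Module.support R (↥S ⧸ P.comap S.subtype) :=
    Module.support_of_exact (LinearMap.exact_subtype_mkQ (P.comap S.subtype))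
      (Submodule.injective_subtype _) (Submodule.mkQ_surjective _)
  have e2a : (↥S ⧸ LinearMap.ker g) ≃ₗ[R] ↥(LinearMap.range g) := g.quotKerEquivRange
  rw [hkerg] at e2a
  have e2 : (↥S ⧸ P.comap S.subtype) ≃ₗ[R] (R ⧸ p) :=
    (e2a.trans (LinearEquiv.ofEq _ _
      (hrangeg.trans (LinearMap.span_singleton_eq_range R _ x)))).trans e1.symm
  have e3 : ↥(P.comap S.subtype) ≃ₗ[R] ↥P := Submodule.comapSubtypeEquivOfLe hPS
  -- supp P ⊆ supp (D (i-1))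
  have hPsub : Module.support R ↥P ⊆ Module.support R ↥(D (i - 1)) := by
    refine Module.support_subset_of_injective
      (LinearMap.codRestrict (D (i - 1)) ((D i).subtype.comp P.subtype) (fun y => y.2)) ?_
    intro a b hab
    have := congrArg Subtype.val hab
    exact Subtype.ext (Subtype.ext this)
  -- the submodule N of M
  set N : Submodule R M := S.map (D i).subtype with hN
  have hNsupp : Module.support R ↥N = Module.support R ↥S :=
    ((Submodule.equivMapOfInjective (D i).subtype (Submodule.injective_subtype _) S).symm).support_eq
  have hNsub : Module.support R ↥N ⊆
      zeroLocus (Module.annihilator R ↥(D (i - 1))) ∪ zeroLocus (p : Set R) := by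
    rw [hNsupp, hsuppS, e3.support_eq, e2.support_eq, hsupp_p]
    exact Set.union_subset_union_left _ (hPsub.trans (Module.support_eq_zeroLocus (R := R) (M := ↥(D (i - 1)))).le)
  -- dimension bound for N
  have hdimN : mDim R ↥N < mDim R ↥(D i) := by
    refine lt_of_le_of_lt (krullDim_le_max_of_subset_union _ p _ hNsub) (max_lt ?_ ?_)
    · rw [← Module.support_eq_zeroLocus (R := R) (M := ↥(D (i - 1)))]
      have := hD3 (i - 1) (by omega)
      rwa [Nat.sub_add_cancel hi1] at this
    · rw [krullDim_zeroLocus]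
      exact hlt.trans_le hQ
  -- apply maximality
  have hNle : N ≤ D (i - 1) := by
    have h4 := hD4 (i - 1) (by omega) N
    rw [Nat.sub_add_cancel hi1] at h4
    exact h4 (Submodule.map_subtype_le _ _) hdimN
  -- derive contradiction
  obtain ⟨y, hy⟩ := P.mkQ_surjective x
  have hyS : y ∈ S := by
    simp only [hS, Submodule.mem_comap]
    rw [hy]
    exact Submodule.mem_span_singleton_self x
  have hyP : y ∈ P := by
    have : (y : M) ∈ N := ⟨y, hyS, rfl⟩
    exact hNle this
  have hx0 : x = 0 := by
    rw [← hy]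
    exact (Submodule.Quotient.mk_eq_zero P).mpr hyP
  have : p = ⊤ := by
    rw [hx, hx0]
    exact (Ideal.eq_top_iff_one _).mpr (by simp [Submodule.mem_colon_singleton])
  exact hprime.ne_top this


/-- every associated prime of `D i / D (i-1)` has maximal dimension, i.e.
`Ass (D i / D (i-1)) = Assh (D i / D (i-1))`. -/
theorem stmt5 {R M : Type*} [CommRing R] [IsNoetherianRing R] [IsLocalRing R]
    [AddCommGroup M] [Module R M] [Module.Finite R M]
    (t : ℕ) (D : ℕ → Submodule R M) (hD : IsDimFiltration R M t D) :
    ∀ i, 1 ≤ i → i ≤ t →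
      ∀ p ∈ associatedPrimes R (↥(D i) ⧸ (D (i - 1)).comap (D i).subtype),
        ringKrullDim (R ⧸ p) = mDim R (↥(D i) ⧸ (D (i - 1)).comap (D i).subtype) :=
  stmt5' t D hD.2.2.1 hD.2.2.2
end

section
/- Let R be a Noetherian local ring, M a finitely generated R-module of dimension d, x = x_1, …, x_d a system of parameters of M. Then for all positive integers n_1, …, n_d, ℓ(M/(x_1^{n_1},…,x_d^{n_d})M) − n_1⋯n_d · e(x; M) ≤ n_1⋯n_d · ( ℓ(M/(x_1,…,x_d)M) − e(x; M) ). -/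
open IsLocalRing

section LenB
variable {R : Type*} [Ring R]

/-- All strict chains of submodules of `M` have length at most `k`. -/
def LenB (R : Type*) [Ring R] (M : Type*) [AddCommGroup M] [Module R M] (k : ℕ) : Prop :=
  ∀ p : LTSeries (Submodule R M), p.length ≤ k

variable {M M₂ : Type*} [AddCommGroup M] [Module R M] [AddCommGroup M₂] [Module R M₂]

lemma LenB.mono {k k' : ℕ} (h : LenB R M k) (hk : k ≤ k') : LenB R M k' :=
  fun p => (h p).trans hk

lemma LenB.of_surjective {k : ℕ} (h : LenB R M k) (f : M →ₗ[R] M₂)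
    (hf : Function.Surjective f) : LenB R M₂ k := fun p => by
  simpa using h (p.map (Submodule.comap f) (Submodule.comap_strictMono_of_surjective hf))

lemma LenB.of_equiv {k : ℕ} (h : LenB R M k) (e : M ≃ₗ[R] M₂) : LenB R M₂ k :=
  h.of_surjective e.toLinearMap e.surjective

/-- abstract counting lemma -/
lemma count_lemma {α β : Type*} [PartialOrder α] [PartialOrder β] {a b : ℕ}
    (ha : ∀ p : LTSeries α, p.length ≤ a) (hb : ∀ p : LTSeries β, p.length ≤ b)
    {l : ℕ} (f : Fin (l + 1) → α × β)
    (hle : ∀ i : Fin l, f i.castSucc ≤ f i.succ)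
    (hne : ∀ i : Fin l, f i.castSucc ≠ f i.succ) : l ≤ a + b := by
  have hha : ∀ x : α, Order.height x ≤ (a : ℕ∞) :=
    fun x => Order.height_le (fun p _ => by exact_mod_cast ha p)
  have hhb : ∀ y : β, Order.height y ≤ (b : ℕ∞) :=
    fun y => Order.height_le (fun p _ => by exact_mod_cast hb p)
  set H : Fin (l + 1) → ℕ :=
    fun i => (Order.height (f i).1).toNat + (Order.height (f i).2).toNat with hH
  have key : ∀ i : Fin l, H i.castSucc < H i.succ := by
    intro i
    have h1 : (f i.castSucc).1 ≤ (f i.succ).1 := (hle i).1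
    have h2 : (f i.castSucc).2 ≤ (f i.succ).2 := (hle i).2
    have hne1 : (f i.castSucc).1 ≠ (f i.succ).1 ∨ (f i.castSucc).2 ≠ (f i.succ).2 := by
      by_contra hc
      push_neg at hc
      exact hne i (Prod.ext hc.1 hc.2)
    have fin1 : ∀ x : α, Order.height x ≠ ⊤ := fun x => ((hha x).trans_lt (by simp)).ne
    have fin2 : ∀ y : β, Order.height y ≠ ⊤ := fun y => ((hhb y).trans_lt (by simp)).ne
    have m1 : (Order.height (f i.castSucc).1).toNat ≤ (Order.height (f i.succ).1).toNat :=
      ENat.toNat_le_toNat (Order.height_mono h1) (fin1 _)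
    have m2 : (Order.height (f i.castSucc).2).toNat ≤ (Order.height (f i.succ).2).toNat :=
      ENat.toNat_le_toNat (Order.height_mono h2) (fin2 _)
    rcases hne1 with h | h
    · have : Order.height (f i.castSucc).1 < Order.height (f i.succ).1 :=
        Order.height_strictMono (lt_of_le_of_ne h1 h) (lt_of_le_of_lt (hha _) (by simp))
      have : (Order.height (f i.castSucc).1).toNat < (Order.height (f i.succ).1).toNat := by
        rwa [← ENat.coe_toNat (fin1 (f i.castSucc).1), ← ENat.coe_toNat (fin1 (f i.succ).1),
          Nat.cast_lt] at this
      simp only [hH]; omega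
    · have : Order.height (f i.castSucc).2 < Order.height (f i.succ).2 :=
        Order.height_strictMono (lt_of_le_of_ne h2 h) (lt_of_le_of_lt (hhb _) (by simp))
      have : (Order.height (f i.castSucc).2).toNat < (Order.height (f i.succ).2).toNat := by
        rwa [← ENat.coe_toNat (fin2 (f i.castSucc).2), ← ENat.coe_toNat (fin2 (f i.succ).2),
          Nat.cast_lt] at this
      simp only [hH]; omega
  have step : ∀ i : Fin (l + 1), (i : ℕ) ≤ H i := by
    intro i
    induction i using Fin.induction with
    | zero => simp
    | succ j ih =>
      have := key j
      simp only [Fin.coe_castSucc] at ih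
      simp only [Fin.val_succ]
      omega
  have hl : l ≤ H (Fin.last l) := by simpa using step (Fin.last l)
  have hfin : H (Fin.last l) ≤ a + b := by
    have t1 : (Order.height (f (Fin.last l)).1).toNat ≤ a := by
      have := hha (f (Fin.last l)).1
      exact ENat.toNat_le_of_le_coe this
    have t2 : (Order.height (f (Fin.last l)).2).toNat ≤ b := by
      have := hhb (f (Fin.last l)).2
      exact ENat.toNat_le_of_le_coe this
    simp only [hH]; omega
  omega

end LenB

section LenB2
variable {R : Type*} [Ring R] {M : Type*} [AddCommGroup M] [Module R M]

lemma LenB.of_submodule_quotient (N : Submodule R M) {a b : ℕ}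
    (hN : LenB R ↥N a) (hQ : LenB R (M ⧸ N) b) : LenB R M (a + b) := by
  intro p
  apply count_lemma hN hQ
    (f := fun i => (Submodule.comap N.subtype (p i), Submodule.map N.mkQ (p i)))
  · intro i
    exact ⟨Submodule.comap_mono (p.step i).le, Submodule.map_mono (p.step i).le⟩
  · intro i heq
    rw [Prod.mk.injEq] at heq
    obtain ⟨h1, h2⟩ := heq
    refine (show p i.castSucc < p i.succ from p.step i).ne ?_
    refine le_antisymm (p.step i).le ?_
    intro q hq
    have : N.mkQ q ∈ Submodule.map N.mkQ (p i.castSucc) := by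
      rw [h2]; exact Submodule.mem_map_of_mem hq
    obtain ⟨p', hp', hpq⟩ := this
    have hdiff : q - p' ∈ N := by
      have : N.mkQ (q - p') = 0 := by rw [map_sub, hpq, sub_self]
      rwa [← LinearMap.mem_ker, Submodule.ker_mkQ] at this
    have hmem : q - p' ∈ p i.succ := sub_mem hq ((show p i.castSucc < p i.succ from p.step i).le hp')
    have : (⟨q - p', hdiff⟩ : N) ∈ Submodule.comap N.subtype (p i.succ) := hmem
    rw [← h1] at this
    have : q - p' ∈ p i.castSucc := this
    simpa using add_mem this hp'

lemma lenB_of_subsingleton [Subsingleton M] : LenB R M 0 := by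
  intro p
  by_contra h
  have h0 : 0 < p.length := by omega
  have := p.step ⟨0, h0⟩
  exact (show p (Fin.castSucc ⟨0, h0⟩) < p (Fin.succ ⟨0, h0⟩) from this).ne (Subsingleton.elim _ _)

lemma lenB_one_of_simple (h : IsSimpleModule R M) : LenB R M 1 := by
  intro p
  by_contra hc
  have h2 : 2 ≤ p.length := by omega
  have l01 : p ⟨0, by omega⟩ < p ⟨1, by omega⟩ := p.strictMono (by simp [Fin.lt_def])
  have l12 : p ⟨1, by omega⟩ < p ⟨2, by omega⟩ := p.strictMono (by simp [Fin.lt_def])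
  rcases h.1.2 (p ⟨1, by omega⟩) with hb | ht
  · rw [hb] at l01; exact not_lt_bot l01
  · rw [ht] at l12; exact (lt_irrefl _ (l12.trans_le le_top))

lemma exists_lenB_of_isFiniteLength (h : IsFiniteLength R M) : ∃ k, LenB R M k := by
  induction h with
  | of_subsingleton => exact ⟨0, lenB_of_subsingleton⟩
  | @of_simple_quotient M _ _ N hsimple h ih =>
    obtain ⟨k, hk⟩ := ih
    exact ⟨k + 1, LenB.of_submodule_quotient N hk (lenB_one_of_simple hsimple)⟩

end LenB2

section ELen
variable {R : Type*} [Ring R] {M : Type*} [AddCommGroup M] [Module R M]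

lemma eLength_eq : eLength R M = ⨆ p : LTSeries (Submodule R M), (p.length : ℕ∞) := by
  rw [eLength, Order.krullDim_eq_iSup_length, WithBot.unbotD_coe]

lemma eLength_toNat_le {k : ℕ} (h : LenB R M k) : (eLength R M).toNat ≤ k := by
  apply ENat.toNat_le_of_le_coe
  rw [eLength_eq]
  exact iSup_le fun p => by exact_mod_cast h p

lemma lenB_eLength_toNat {k : ℕ} (h : LenB R M k) : LenB R M (eLength R M).toNat := by
  intro p
  have h1 : (p.length : ℕ∞) ≤ eLength R M := by
    rw [eLength_eq]
    exact le_iSup (fun q : LTSeries (Submodule R M) => (q.length : ℕ∞)) p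
  have h2 : eLength R M ≤ (k : ℕ∞) := by
    rw [eLength_eq]; exact iSup_le fun p => by exact_mod_cast h p
  have hne : eLength R M ≠ ⊤ := (h2.trans_lt (by simp)).ne
  rw [← ENat.coe_toNat hne, Nat.cast_le] at h1
  exact h1

end ELen

section LemC
variable {R : Type*} [CommRing R] {M : Type*} [AddCommGroup M] [Module R M]

lemma lenB_pow_step (I : Ideal R) (y : R) {L : ℕ}
    (h : LenB R (M ⧸ (I + Ideal.span {y}) • (⊤ : Submodule R M)) L) :
    ∀ n : ℕ, 1 ≤ n → LenB R (M ⧸ (I + Ideal.span {y ^ n}) • (⊤ : Submodule R M)) (n * L) := by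
  intro n hn
  induction n with
  | zero => omega
  | succ n ih =>
    rcases Nat.eq_zero_or_pos n with h0 | hpos
    · subst h0
      rw [pow_one]
      exact h.mono (by omega)
    · have ihn := ih hpos
      set A : Submodule R M := (I + Ideal.span {y ^ (n + 1)}) • (⊤ : Submodule R M) with hA
      set g : M →ₗ[R] (M ⧸ A) := A.mkQ ∘ₗ (LinearMap.lsmul R M (y ^ n)) with hg
      have hAsup : A = I • (⊤ : Submodule R M) ⊔ Ideal.span {y ^ (n + 1)} • (⊤ : Submodule R M) := by
        rw [hA, ← Submodule.sup_smul]; rfl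
      have hker : (I + Ideal.span {y}) • (⊤ : Submodule R M) ≤ LinearMap.ker g := by
        rw [Submodule.smul_le]
        intro r hr m _
        rw [LinearMap.mem_ker, hg, LinearMap.comp_apply, LinearMap.lsmul_apply,
          Submodule.mkQ_apply, Submodule.Quotient.mk_eq_zero]
        rcases Submodule.mem_sup.mp hr with ⟨i, hi, c, hc, rfl⟩
        obtain ⟨t, rfl⟩ := Ideal.mem_span_singleton'.mp hc
        have : y ^ n • ((i + t * y) • m) = (i * y ^ n) • m + (t * y ^ (n + 1)) • m := by
          rw [smul_smul, ← add_smul]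
          ring_nf
        rw [this, hAsup]
        refine add_mem ?_ ?_
        · exact Submodule.mem_sup_left (Submodule.smul_mem_smul (I.mul_mem_right _ hi) trivial)
        · refine Submodule.mem_sup_right (Submodule.smul_mem_smul ?_ trivial)
          exact Ideal.mem_span_singleton'.mpr ⟨t, rfl⟩
      -- the submodule N = range g has length ≤ L
      have h1 : LenB R ↥(LinearMap.range g) L := by
        have hker' : (I + Ideal.span {y}) • (⊤ : Submodule R M) ≤ LinearMap.ker g.rangeRestrict := by
          rwa [LinearMap.ker_rangeRestrict]
        have hsurj : Function.Surjective
            (Submodule.liftQ _ g.rangeRestrict hker') := by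
          intro z
          obtain ⟨m, hm⟩ := g.surjective_rangeRestrict z
          exact ⟨Submodule.Quotient.mk m, hm⟩
        exact h.of_surjective _ hsurj
      -- identify the quotient by N
      have hT : A ⊔ Ideal.span {y ^ n} • (⊤ : Submodule R M)
          = (I + Ideal.span {y ^ n}) • (⊤ : Submodule R M) := by
        rw [hAsup, sup_assoc,
          show Ideal.span {y ^ (n + 1)} • (⊤ : Submodule R M) ⊔ Ideal.span {y ^ n} • ⊤
              = Ideal.span {y ^ n} • ⊤ from
            sup_eq_right.mpr (Submodule.smul_mono_left
              (Ideal.span_singleton_le_span_singleton.mpr ⟨y, pow_succ y n⟩)),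
          ← Submodule.sup_smul]
        rfl
      set T : Submodule R M := A ⊔ Ideal.span {y ^ n} • (⊤ : Submodule R M) with hTdef
      have hrg : LinearMap.range g = Submodule.map A.mkQ T := by
        rw [hTdef, Submodule.map_sup]
        have hmapA : Submodule.map A.mkQ A = ⊥ := by
          rw [eq_bot_iff]
          rintro z ⟨m, hm, rfl⟩
          simpa [Submodule.mem_bot, Submodule.Quotient.mk_eq_zero] using hm
        rw [hmapA, bot_sup_eq]
        ext z
        simp only [LinearMap.mem_range, Submodule.mem_map]
        constructor
        · rintro ⟨m, rfl⟩
          exact ⟨y ^ n • m, Submodule.smul_mem_smul (Ideal.mem_span_singleton_self _) trivial, rfl⟩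
        · rintro ⟨m, hm, rfl⟩
          have hle : Ideal.span {y ^ n} • (⊤ : Submodule R M)
              ≤ LinearMap.range (LinearMap.lsmul R M (y ^ n)) := by
            rw [Submodule.smul_le]
            intro r hr m' _
            obtain ⟨t, rfl⟩ := Ideal.mem_span_singleton'.mp hr
            exact ⟨t • m', by rw [LinearMap.lsmul_apply, smul_smul, mul_comm]⟩
          obtain ⟨m', hm'⟩ := hle hm
          exact ⟨m', by rw [hg, LinearMap.comp_apply]; exact congrArg A.mkQ hm'⟩
      have h2 : LenB R ((M ⧸ A) ⧸ LinearMap.range g) (n * L) := by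
        have e1 : ((M ⧸ A) ⧸ LinearMap.range g) ≃ₗ[R] ((M ⧸ A) ⧸ Submodule.map A.mkQ T) :=
          Submodule.quotEquivOfEq _ _ hrg
        have e2 : ((M ⧸ A) ⧸ Submodule.map A.mkQ T) ≃ₗ[R] (M ⧸ T) :=
          Submodule.quotientQuotientEquivQuotient A T le_sup_left
        have e3 : (M ⧸ T) ≃ₗ[R] (M ⧸ (I + Ideal.span {y ^ n}) • (⊤ : Submodule R M)) :=
          Submodule.quotEquivOfEq _ _ hT
        exact (ihn.of_equiv e3.symm).of_equiv (e1.trans e2).symm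
      have := LenB.of_submodule_quotient (LinearMap.range g) h1 h2
      exact this.mono (by ring_nf; omega)

end LemC

section Multi
variable {R : Type*} [CommRing R] {M : Type*} [AddCommGroup M] [Module R M]

lemma lenB_multi {d : ℕ} (x : Fin d → R) (nn : Fin d → ℕ) (hnn : ∀ j, 1 ≤ nn j) {L : ℕ}
    (hL : LenB R (M ⧸ Ideal.span (Set.range x) • (⊤ : Submodule R M)) L) :
    LenB R (M ⧸ Ideal.span (Set.range (fun j => x j ^ nn j)) • (⊤ : Submodule R M))
      ((∏ j, nn j) * L) := by
  set F : ℕ → Fin d → R := fun m j => x j ^ (if j.val < m then nn j else 1) with hF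
  have main : ∀ m, m ≤ d →
      LenB R (M ⧸ Ideal.span (Set.range (F m)) • (⊤ : Submodule R M))
        ((∏ j ∈ Finset.univ.filter (fun j : Fin d => j.val < m), nn j) * L) := by
    intro m
    induction m with
    | zero =>
      intro _
      have h1 : F 0 = x := by
        funext j
        simp [hF]
      have h2 : Finset.univ.filter (fun j : Fin d => j.val < 0) = ∅ := by
        ext j; simp
      rw [h1, h2]
      simpa using hL
    | succ m ih =>
      intro hm
      have hmd : m < d := hm
      have ihm := ih (le_of_lt hmd)
      set j₀ : Fin d := ⟨m, hmd⟩ with hj₀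
      set I : Ideal R := Ideal.span (F (m + 1) '' {j | j ≠ j₀}) with hI
      have hsplit : ∀ k, Ideal.span (Set.range (F k))
          = Ideal.span (F k '' {j | j ≠ j₀}) + Ideal.span {F k j₀} := by
        intro k
        have huniv : (Set.univ : Set (Fin d)) = {j | j ≠ j₀} ∪ {j₀} := by
          ext j
          by_cases h : j = j₀ <;> simp [h]
        rw [← Set.image_univ, huniv, Set.image_union, Ideal.span_union, Set.image_singleton]
        rfl
      have himg : F m '' {j | j ≠ j₀} = F (m + 1) '' {j | j ≠ j₀} := by
        apply Set.image_congr
        intro j hj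
        have hjm : j.val ≠ m := by
          intro hc
          exact hj (Fin.ext hc)
        have : (j.val < m) = (j.val < m + 1) := by
          have : j.val < m ↔ j.val < m + 1 := by omega
          exact propext this
        simp only [hF, this]
      have hFm : F m j₀ = x j₀ := by
        simp [hF, hj₀]
      have hFm1 : F (m + 1) j₀ = x j₀ ^ nn j₀ := by
        simp [hF, hj₀]
      have hbase : LenB R (M ⧸ (I + Ideal.span {x j₀}) • (⊤ : Submodule R M))
          ((∏ j ∈ Finset.univ.filter (fun j : Fin d => j.val < m), nn j) * L) := by
        have := ihm
        rw [hsplit m, himg, hFm] at this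
        exact this
      have hstep := lenB_pow_step (M := M) I (x j₀) hbase (nn j₀) (hnn j₀)
      have hgoalspan : Ideal.span (Set.range (F (m + 1)))
          = I + Ideal.span {x j₀ ^ nn j₀} := by
        rw [hsplit (m + 1), hFm1, hI]
      have hprod : (∏ j ∈ Finset.univ.filter (fun j : Fin d => j.val < m + 1), nn j)
          = nn j₀ * ∏ j ∈ Finset.univ.filter (fun j : Fin d => j.val < m), nn j := by
        have hins : Finset.univ.filter (fun j : Fin d => j.val < m + 1)
            = insert j₀ (Finset.univ.filter (fun j : Fin d => j.val < m)) := by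
          ext j
          simp only [Finset.mem_filter, Finset.mem_insert, Finset.mem_univ, true_and]
          constructor
          · intro h
            rcases Nat.lt_succ_iff_lt_or_eq.mp h with h' | h'
            · exact Or.inr h'
            · exact Or.inl (Fin.ext h')
          · rintro (rfl | h)
            · exact Nat.lt_succ_self m
            · omega
        rw [hins, Finset.prod_insert (by simp [hj₀])]
      rw [hgoalspan, hprod, mul_assoc]
      exact hstep
  have h1 : F d = fun j => x j ^ nn j := by
    funext j
    simp [hF, j.isLt]
  have h2 : Finset.univ.filter (fun j : Fin d => j.val < d) = Finset.univ := by
    ext j; simp [j.isLt]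
  have := main d le_rfl
  rw [h1, h2] at this
  exact this

end Multi

open Filter

/-- for a system of parameters `x` of `M`,
`ℓ(M/(x_1^{n_1},…,x_d^{n_d})M) − n_1⋯n_d·e(x;M) ≤ n_1⋯n_d·(ℓ(M/xM) − e(x;M))`.
The Serre multiplicity `e` is characterized by `e(x; M) = lim_n ℓ(M/(x_1^n,…,x_d^n)M)/n^d`. -/
theorem stmt17 {R M : Type*} [CommRing R] [IsNoetherianRing R] [IsLocalRing R]
    [AddCommGroup M] [Module R M] [Module.Finite R M]
    (d : ℕ) (x : Fin d → R) (hx : IsSOP R M d x)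
    (e : ℕ)
    (he : Tendsto (fun n : ℕ =>
        ((eLength R (M ⧸ (Ideal.span (Set.range (fun j => x j ^ n)) •
          (⊤ : Submodule R M)))).toNat : ℝ) / (n : ℝ) ^ d)
      atTop (nhds (e : ℝ))) :
    ∀ nn : Fin d → ℕ, (∀ j, 1 ≤ nn j) →
      ((eLength R (M ⧸ (Ideal.span (Set.range (fun j => x j ^ nn j)) •
          (⊤ : Submodule R M)))).toNat : ℤ) - (∏ j, (nn j : ℤ)) * e ≤
        (∏ j, (nn j : ℤ)) *
          (((eLength R (M ⧸ (Ideal.span (Set.range x) • (⊤ : Submodule R M)))).toNat : ℤ) - e) := by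
  intro nn hnn
  obtain ⟨-, -, hfl⟩ := hx
  obtain ⟨k, hk⟩ := exists_lenB_of_isFiniteLength hfl
  have hL : LenB R (M ⧸ (Ideal.span (Set.range x) • (⊤ : Submodule R M)))
      (eLength R (M ⧸ (Ideal.span (Set.range x) • (⊤ : Submodule R M)))).toNat :=
    lenB_eLength_toNat hk
  have hmulti := lenB_multi (M := M) x nn hnn hL
  have hle := eLength_toNat_le hmulti
  set L : ℕ := (eLength R (M ⧸ (Ideal.span (Set.range x) • (⊤ : Submodule R M)))).toNat with hLdef
  set ℓ' : ℕ := (eLength R (M ⧸ (Ideal.span (Set.range (fun j => x j ^ nn j)) •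
      (⊤ : Submodule R M)))).toNat with hldef
  have hcast : ((∏ j, nn j : ℕ) : ℤ) = ∏ j, (nn j : ℤ) := Nat.cast_prod _ _
  have hc : (ℓ' : ℤ) ≤ (∏ j, (nn j : ℤ)) * (L : ℤ) := by
    rw [← hcast, ← Nat.cast_mul, Nat.cast_le]
    exact hle
  rw [mul_sub]
  linarith
end
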